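/- Let M : Matrix (Fin 2) (Fin 2) (ZMod 2) be the matrix with M 0 0 = 1, M 0 1 = 0, M 1 0 = 1, M 1 1 = 1, and for m : ℕ define the m-fold Kronecker power P : (Fin m → Fin 2) → (Fin m → Fin 2) → ZMod 2 by P b z = ∏_{j : Fin m} M (b j) (z j). Then for every row index b : Fin m → Fin 2, the Hamming weight of row b, i.e. the cardinality of {z : Fin m → Fin 2 | P b z ≠ 0}, equals 2^{|{j : b j = 1}|}; consequently, for every i ≤ m, the number of rows b whose Hamming weight equals 2^{m-i} is exactly binomial(m, i). -/
import Mathlib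


noncomputable section

/-- The 2×2 lower-triangular matrix `[[1,0],[1,1]]` over `ZMod 2`. -/
def M : Matrix (Fin 2) (Fin 2) (ZMod 2) := !![1, 0; 1, 1]

/-- The `m`-fold Kronecker power of `M`, with rows and columns indexed by binary
vectors: `P b z = ∏_j M (b j) (z j)`. -/
def P (m : ℕ) : (Fin m → Fin 2) → (Fin m → Fin 2) → ZMod 2 :=
  fun b z => ∏ j : Fin m, M (b j) (z j)

theorem row_weight (m : ℕ) (b : Fin m → Fin 2) :
    (Finset.univ.filter (fun z : Fin m → Fin 2 => P m b z ≠ 0)).card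
      = 2 ^ (Finset.univ.filter (fun j : Fin m => b j = 1)).card := by
  have h1 : ∀ z : Fin m → Fin 2, P m b z ≠ 0 ↔ ∀ j, M (b j) (z j) ≠ 0 := by
    intro z
    simp [P, Finset.prod_ne_zero_iff]
  have h2 : (Finset.univ.filter (fun z : Fin m → Fin 2 => P m b z ≠ 0)).card
      = Fintype.card {z : Fin m → Fin 2 // ∀ j, M (b j) (z j) ≠ 0} := by
    rw [Fintype.card_subtype]
    congr 1
    exact Finset.filter_congr (fun z _ => by simpa using h1 z)
  rw [h2, Fintype.card_congr (Equiv.subtypePiEquivPi (p := fun j x => M (b j) x ≠ 0)),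
    Fintype.card_pi]
  have h3 : ∀ j : Fin m, Fintype.card {x : Fin 2 // M (b j) x ≠ 0}
      = if b j = 1 then 2 else 1 := by
    intro j
    have hj : b j = 0 ∨ b j = 1 := by rcases b j with ⟨v, hv⟩; interval_cases v <;> simp
    rcases hj with h | h <;> rw [h] <;> decide
  rw [Finset.prod_congr rfl (fun j _ => h3 j), Finset.prod_ite, Finset.prod_const,
    Finset.prod_const, one_pow, mul_one]

lemma two_cases (x : Fin 2) : x = 0 ∨ x = 1 := by
  rcases x with ⟨v, hv⟩; interval_cases v <;> simp


/-- Each row `b` of the Kronecker power has Hamming weight `2^{#{j : b j = 1}}`;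
consequently, for each `i ≤ m` exactly `C(m,i)` rows have Hamming weight `2^{m-i}`. -/
theorem kronecker_row_weights (m : ℕ) :
    (∀ b : Fin m → Fin 2,
      (Finset.univ.filter (fun z : Fin m → Fin 2 => P m b z ≠ 0)).card
        = 2 ^ (Finset.univ.filter (fun j : Fin m => b j = 1)).card) ∧
    (∀ i : ℕ, i ≤ m →
      (Finset.univ.filter (fun b : Fin m → Fin 2 =>
          (Finset.univ.filter (fun z : Fin m → Fin 2 => P m b z ≠ 0)).card
            = 2 ^ (m - i))).card
        = m.choose i) := by
  refine ⟨row_weight m, fun i hi => ?_⟩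
  have hpow : ∀ b : Fin m → Fin 2,
      ((Finset.univ.filter fun z : Fin m → Fin 2 => P m b z ≠ 0).card = 2 ^ (m - i)) ↔
      (Finset.univ.filter fun j : Fin m => b j = 1).card = m - i := by
    intro b
    rw [row_weight m b]
    exact ⟨fun h => Nat.pow_right_injective le_rfl h, fun h => by rw [h]⟩
  have key : (Finset.univ.filter (fun b : Fin m → Fin 2 =>
          (Finset.univ.filter (fun z : Fin m → Fin 2 => P m b z ≠ 0)).card
            = 2 ^ (m - i))).card
      = (Finset.powersetCard (m - i) (Finset.univ : Finset (Fin m))).card := by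
    apply Finset.card_bij (fun b _ => Finset.univ.filter (fun j => b j = 1))
    · intro b hb
      simp only [Finset.mem_filter, Finset.mem_univ, true_and] at hb
      rw [Finset.mem_powersetCard_univ]
      exact (hpow b).mp hb
    · intro b1 h1 b2 h2 heq
      funext j
      have hj := Finset.ext_iff.mp heq j
      simp only [Finset.mem_filter, Finset.mem_univ, true_and] at hj
      rcases two_cases (b1 j) with h | h <;> rcases two_cases (b2 j) with h' | h' <;>
        simp_all
    · intro s hs
      rw [Finset.mem_powersetCard_univ] at hs
      refine ⟨fun j => if j ∈ s then 1 else 0, by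
        simp only [Finset.mem_filter, Finset.mem_univ, true_and]
        rw [hpow, ← hs]
        congr 1
        ext j
        simp only [Finset.mem_filter, Finset.mem_univ, true_and]
        split <;> simp_all, ?_⟩
      ext j
      simp only [Finset.mem_filter, Finset.mem_univ, true_and]
      split <;> simp_all
  rw [key, Finset.card_powersetCard, Finset.card_univ, Fintype.card_fin,
    Nat.choose_symm hi]


end
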